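/- If p is a monic polynomial of degree d with real coefficients all of whose roots are real, then for every real number s the polynomial p + s·p' also has only real roots. -/

import Mathlib

open Polynomial

/-- A real polynomial is hyperbolic if all its complex roots are real. -/
def Hyperbolic (p : Polynomial ℝ) : Prop :=
  ∀ z : ℂ, Polynomial.aeval z p = 0 → z.im = 0

/-- Nuij's theorem: if `p` is monic of degree `d` and hyperbolic, then
`p + s • p'` is hyperbolic for every real `s`. -/
theorem nuij_theorem (d : ℕ) (p : Polynomial ℝ) (hm : p.Monic)
    (hdeg : p.natDegree = d) (hp : Hyperbolic p) (s : ℝ) :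
    Hyperbolic (p + s • Polynomial.derivative p) := by
  classical
  intro z hz
  by_contra hzim
  set q : ℂ[X] := p.map (algebraMap ℝ ℂ) with hq
  have hqm : q.Monic := hm.map _
  have hsplit : q.Splits := IsAlgClosed.splits q
  have hprod : q = (q.roots.map fun r => X - C r).prod :=
    hsplit.eq_prod_roots_of_monic hqm
  -- every root of q is real
  have hroots_im : ∀ r ∈ q.roots, r.im = 0 := by
    intro r hr
    apply hp
    have := isRoot_of_mem_roots hr
    rwa [IsRoot, eval_map, ← aeval_def] at this
  -- z - r ≠ 0 for roots r
  have hzr : ∀ r ∈ q.roots, z - r ≠ 0 := by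
    intro r hr h
    have : z = r := by linear_combination h
    exact hzim (this ▸ hroots_im r hr)
  -- q(z) ≠ 0
  have hqz : eval z q ≠ 0 := by
    rw [hprod, eval_multiset_prod]
    apply Multiset.prod_ne_zero
    intro h0
    simp only [Multiset.mem_map] at h0
    obtain ⟨r, hr, hr0⟩ := h0
    obtain ⟨r', hr', hr''⟩ := hr
    rw [← hr''] at hr0
    simp only [eval_sub, eval_X, eval_C] at hr0
    exact hzr r' hr' hr0
  -- each term of the derivative sum
  have hterm_eq : ∀ r ∈ q.roots, (evalRingHom z)
      ((Multiset.map (fun r' => X - C r') (q.roots.erase r)).prod * derivative (X - C r)) =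
      eval z q * (z - r)⁻¹ := by
    intro r hr
    simp only [derivative_X_sub_C, mul_one, coe_evalRingHom]
    rw [eval_multiset_prod, Multiset.map_map]
    have hcons : eval z q = (z - r) * ((q.roots.erase r).map fun r' => eval z (X - C r')).prod := by
      conv_lhs => rw [hprod]
      rw [eval_multiset_prod]
      have hce := Multiset.cons_erase hr
      calc ((q.roots.map fun r' => X - C r').map (eval z)).prod
          = ((q.roots.map fun r' => eval z (X - C r'))).prod := by rw [Multiset.map_map]; rfl
        _ = (((r ::ₘ q.roots.erase r).map fun r' => eval z (X - C r'))).prod := by rw [hce]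
        _ = (z - r) * ((q.roots.erase r).map fun r' => eval z (X - C r')).prod := by
            rw [Multiset.map_cons, Multiset.prod_cons]; simp
    rw [hcons, mul_comm (z - r), mul_assoc, mul_inv_cancel₀ (hzr r hr), mul_one]
    rfl
  -- derivative eval as a sum
  have hderiv : eval z (derivative q) =
      eval z q * (q.roots.map fun r => (z - r)⁻¹).sum := by
    conv_lhs => rw [hprod]
    rw [derivative_prod, ← coe_evalRingHom, map_multiset_sum, Multiset.map_map]
    have hmc : Multiset.map (⇑(evalRingHom z) ∘ fun i =>
        (Multiset.map (fun r => X - C r) (q.roots.erase i)).prod * derivative (X - C i)) q.roots =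
        Multiset.map (fun r => eval z q * (z - r)⁻¹) q.roots :=
      Multiset.map_congr rfl hterm_eq
    rw [hmc, Multiset.sum_map_mul_left]
    rfl
  -- the hypothesis
  have hz' : eval z q + (s : ℂ) * eval z (derivative q) = 0 := by
    have h1 : (aeval z) (p + s • Polynomial.derivative p) = 0 := hz
    rw [map_add, map_smul] at h1
    rw [aeval_def, ← eval_map, aeval_def, ← eval_map, ← derivative_map] at h1
    rw [hq]
    rw [Complex.real_smul] at h1
    exact h1
  rw [hderiv] at hz'
  have key : (1 : ℂ) + (s : ℂ) * (q.roots.map fun r => (z - r)⁻¹).sum = 0 := by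
    have h2 : eval z q * (1 + (s : ℂ) * (q.roots.map fun r => (z - r)⁻¹).sum) = 0 := by
      linear_combination hz'
    rcases mul_eq_zero.mp h2 with h | h
    · exact absurd h hqz
    · exact h
  -- imaginary part of the sum
  set S := (q.roots.map fun r => (z - r)⁻¹).sum with hS
  have him : S.im = (q.roots.map fun r => -z.im / Complex.normSq (z - r)).sum := by
    rw [hS, ← Complex.coe_imAddGroupHom, map_multiset_sum, Multiset.map_map]
    congr 1
    refine Multiset.map_congr rfl fun r hr => ?_
    simp only [Function.comp_apply, Complex.coe_imAddGroupHom, Complex.inv_im]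
    congr 2
    simp [Complex.sub_im, hroots_im r hr]
  have hre : (1 : ℝ) + s * S.re = 0 := by
    have := congrArg Complex.re key
    simpa using this
  have him0 : s * S.im = 0 := by
    have := congrArg Complex.im key
    simpa using this
  have hs0 : s ≠ 0 := by
    intro h; rw [h] at hre; simp at hre
  have hSim0 : S.im = 0 := by
    rcases mul_eq_zero.mp him0 with h | h
    · exact absurd h hs0
    · exact h
  have hne : q.roots ≠ 0 := by
    intro h
    have hS0 : S = 0 := by rw [hS, h]; simp
    rw [hS0] at hre
    simp at hre
  -- but each term of the im-sum has strictly consistent sign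
  rw [him] at hSim0
  have hterm : ∀ x ∈ q.roots.map fun r => -z.im / Complex.normSq (z - r),
      (if 0 < z.im then x < 0 else 0 < x) := by
    intro x hx
    simp only [Multiset.mem_map] at hx
    obtain ⟨r, hr, hrx⟩ := hx
    have hpos : 0 < Complex.normSq (z - r) := by
      rw [Complex.normSq_pos]; exact hzr r hr
    by_cases h : 0 < z.im
    · rw [if_pos h, ← hrx]
      exact div_neg_of_neg_of_pos (by linarith) hpos
    · rw [if_neg h, ← hrx]
      have hlt : z.im < 0 := lt_of_le_of_ne (not_lt.mp h) hzim
      exact div_pos (by linarith) hpos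
  have hcard : 0 < Multiset.card (q.roots.map fun r => -z.im / Complex.normSq (z - r)) := by
    rw [Multiset.card_map]
    exact Multiset.card_pos.mpr hne
  by_cases h : 0 < z.im
  · have h2 : ((q.roots.map fun r => -z.im / Complex.normSq (z - r)).map id).sum <
        ((q.roots.map fun r => -z.im / Complex.normSq (z - r)).map fun _ => (0:ℝ)).sum := by
      apply Multiset.sum_lt_sum_of_nonempty (Multiset.card_pos.mp hcard)
      intro x hx
      have h3 := hterm x hx
      rw [if_pos h] at h3
      simpa using h3
    simp [Multiset.map_id] at h2
    linarith [hSim0]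
  · have h2 : ((q.roots.map fun r => -z.im / Complex.normSq (z - r)).map fun _ => (0:ℝ)).sum <
        ((q.roots.map fun r => -z.im / Complex.normSq (z - r)).map id).sum := by
      apply Multiset.sum_lt_sum_of_nonempty (Multiset.card_pos.mp hcard)
      intro x hx
      have h3 := hterm x hx
      rw [if_neg h] at h3
      simpa using h3
    simp [Multiset.map_id] at h2
    linarith [hSim0]
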